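/- Let B be a real p×p matrix and r > 0 such that every complex eigenvalue of B has real part at least r. Then there exists a constant M ≥ 0 such that for all t ≥ 0 and all indices i, j, the (i,j) entry of exp(−tB) satisfies |exp(−tB)_{ij}| ≤ M·e^{−(r/2)t}. -/

import Mathlib

open Matrix

open NormedSpace in
private lemma stmt12_aux1 {p : ℕ} (Bc : Matrix (Fin p) (Fin p) ℂ) (r : ℝ) (hr : 0 < r)
    (μ : ℂ) (hμ : r ≤ μ.re) (v : Fin p → ℂ) (k : ℕ)
    (hv : ((Bc - μ • 1) ^ k).mulVec v = 0) :
    ∃ K : ℝ, 0 ≤ K ∧ ∀ t : ℝ, 0 ≤ t →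
      ‖(exp (-((t : ℂ) • Bc))).mulVec v‖ ≤ K * Real.exp (-(r / 2) * t) := by
  letI : SeminormedRing (Matrix (Fin p) (Fin p) ℂ) := Matrix.linftyOpSemiNormedRing
  letI : NormedRing (Matrix (Fin p) (Fin p) ℂ) := Matrix.linftyOpNormedRing
  letI : NormedAlgebra ℂ (Matrix (Fin p) (Fin p) ℂ) := Matrix.linftyOpNormedAlgebra
  set N : Matrix (Fin p) (Fin p) ℂ := Bc - μ • 1 with hN
  refine ⟨∑ m ∈ Finset.range k, (2 / r) ^ m * ‖(N ^ m).mulVec v‖, by positivity, ?_⟩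
  intro t ht
  have hsplit : -((t : ℂ) • Bc) = (-(t * μ)) • (1 : Matrix (Fin p) (Fin p) ℂ) + (-(t:ℂ)) • N := by
    rw [hN, smul_sub, smul_smul]
    module
  have hcomm : Commute ((-(t*μ)) • (1 : Matrix (Fin p) (Fin p) ℂ)) ((-(t:ℂ)) • N) :=
    ((Commute.one_left _).smul_left _).smul_right _
  have hexp : exp (-((t:ℂ) • Bc)) = Complex.exp (-(t*μ)) • exp ((-(t:ℂ)) • N) := by
    rw [hsplit, Matrix.exp_add_of_commute _ _ hcomm]
    have h1 : exp ((-(t*μ)) • (1 : Matrix (Fin p) (Fin p) ℂ))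
        = algebraMap ℂ (Matrix (Fin p) (Fin p) ℂ) (Complex.exp (-(t*μ))) := by
      rw [← Algebra.algebraMap_eq_smul_one]
      exact (algebraMap_exp_comm (𝕂 := ℂ) (𝔸 := Matrix (Fin p) (Fin p) ℂ) _).symm.trans
        (by rw [Complex.exp_eq_exp_ℂ])
    rw [h1, ← Algebra.smul_def]
  -- truncate the exponential series applied to v
  let L : Matrix (Fin p) (Fin p) ℂ →ₗ[ℂ] (Fin p → ℂ) :=
    { toFun := fun M => M.mulVec v
      map_add' := fun M₁ M₂ => Matrix.add_mulVec M₁ M₂ v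
      map_smul' := fun c M => Matrix.smul_mulVec c M v }
  have hsummable : Summable fun m : ℕ => (m.factorial⁻¹ : ℂ) • ((-(t:ℂ)) • N) ^ m :=
    expSeries_summable' _
  have htrunc : (exp ((-(t:ℂ)) • N)).mulVec v
      = ∑ m ∈ Finset.range k, ((m.factorial⁻¹ : ℂ) * (-(t:ℂ)) ^ m) • (N ^ m).mulVec v := by
    have hL : (exp ((-(t:ℂ)) • N)).mulVec v
        = ∑' m : ℕ, ((m.factorial⁻¹ : ℂ) • ((-(t:ℂ)) • N) ^ m).mulVec v := by
      rw [exp_eq_tsum ℂ]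
      exact (L.toContinuousLinearMap.map_tsum hsummable :)
    rw [hL]
    have hterm : ∀ m : ℕ, ((m.factorial⁻¹ : ℂ) • ((-(t:ℂ)) • N) ^ m).mulVec v
        = ((m.factorial⁻¹ : ℂ) * (-(t:ℂ)) ^ m) • (N ^ m).mulVec v := by
      intro m
      rw [smul_pow, smul_smul, Matrix.smul_mulVec]
    simp_rw [hterm]
    refine tsum_eq_sum ?_
    intro m hm
    have hkm : k ≤ m := by simpa using hm
    have hNm : (N ^ m).mulVec v = 0 := by
      have : N ^ m = N ^ (m - k) * N ^ k := by
        rw [← pow_add]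
        congr 1
        omega
      rw [this, ← Matrix.mulVec_mulVec, hv, Matrix.mulVec_zero]
    rw [hNm, smul_zero]
  have key : ∀ m : ℕ, ((m.factorial : ℝ))⁻¹ * t ^ m * Real.exp (-(t * r))
      ≤ (2 / r) ^ m * Real.exp (-(r / 2) * t) := by
    intro m
    have hx : (0:ℝ) ≤ r / 2 * t := by positivity
    have h1 : (r / 2 * t) ^ m / (m.factorial : ℝ) ≤ Real.exp (r / 2 * t) := by
      refine le_trans ?_ (Real.sum_le_exp_of_nonneg hx (m+1))
      refine Finset.single_le_sum (f := fun i => (r / 2 * t) ^ i / (i.factorial : ℝ))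
        (fun i _ => by positivity) (Finset.self_mem_range_succ m)
    have hfac : (0:ℝ) < (m.factorial : ℝ) := by positivity
    have ht2 : t ^ m = (2 / r) ^ m * (r / 2 * t) ^ m := by
      rw [← mul_pow]
      congr 1
      field_simp
    have h2 : ((m.factorial : ℝ))⁻¹ * t ^ m ≤ (2 / r) ^ m * Real.exp (r / 2 * t) := by
      rw [ht2]
      rw [div_le_iff₀ hfac] at h1
      calc ((m.factorial : ℝ))⁻¹ * ((2 / r) ^ m * (r / 2 * t) ^ m)
          ≤ ((m.factorial : ℝ))⁻¹ * ((2 / r) ^ m * (Real.exp (r / 2 * t) * (m.factorial : ℝ))) := by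
            gcongr
          _ = (2 / r) ^ m * Real.exp (r / 2 * t) := by
            field_simp
    calc ((m.factorial : ℝ))⁻¹ * t ^ m * Real.exp (-(t * r))
        ≤ (2 / r) ^ m * Real.exp (r / 2 * t) * Real.exp (-(t * r)) := by
          gcongr
        _ = (2 / r) ^ m * Real.exp (-(r / 2) * t) := by
          rw [mul_assoc, ← Real.exp_add]
          ring_nf
  rw [hexp, Matrix.smul_mulVec, norm_smul, htrunc]
  have hnormc : ‖Complex.exp (-(↑t * μ))‖ = Real.exp (-(t * μ.re)) := by
    rw [Complex.norm_exp]
    congr 1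
    simp [Complex.mul_re]
  have hsum : ‖∑ m ∈ Finset.range k, ((m.factorial⁻¹:ℂ) * (-(t:ℂ))^m) • (N^m).mulVec v‖
      ≤ ∑ m ∈ Finset.range k, (m.factorial:ℝ)⁻¹ * t^m * ‖(N^m).mulVec v‖ := by
    refine (norm_sum_le _ _).trans (Finset.sum_le_sum fun m _ => ?_)
    rw [norm_smul]
    have hc : ‖(m.factorial⁻¹:ℂ) * (-(t:ℂ))^m‖ = (m.factorial:ℝ)⁻¹ * t^m := by
      rw [norm_mul, norm_pow, norm_neg, norm_inv]
      simp [Complex.norm_natCast, Complex.norm_real, abs_of_nonneg ht]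
    rw [hc]
  calc ‖Complex.exp (-(↑t*μ))‖ * ‖∑ m ∈ Finset.range k,
        ((m.factorial⁻¹:ℂ) * (-(t:ℂ))^m) • (N^m).mulVec v‖
      ≤ Real.exp (-(t*r)) * ∑ m ∈ Finset.range k,
          (m.factorial:ℝ)⁻¹ * t^m * ‖(N^m).mulVec v‖ := by
        rw [hnormc]
        have hee : Real.exp (-(t*μ.re)) ≤ Real.exp (-(t*r)) := by
          apply Real.exp_le_exp.mpr
          nlinarith
        have hsumnn : (0:ℝ) ≤ ∑ m ∈ Finset.range k,
            (m.factorial:ℝ)⁻¹ * t^m * ‖(N^m).mulVec v‖ :=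
          Finset.sum_nonneg fun m _ => by positivity
        exact mul_le_mul hee hsum (norm_nonneg _) (Real.exp_nonneg _)
    _ = ∑ m ∈ Finset.range k,
          ((m.factorial:ℝ)⁻¹ * t^m * Real.exp (-(t*r))) * ‖(N^m).mulVec v‖ := by
        rw [Finset.mul_sum]
        exact Finset.sum_congr rfl fun m _ => by ring
    _ ≤ ∑ m ∈ Finset.range k, ((2/r)^m * Real.exp (-(r/2)*t)) * ‖(N^m).mulVec v‖ :=
        Finset.sum_le_sum fun m _ => mul_le_mul_of_nonneg_right (key m) (norm_nonneg _)
    _ = (∑ m ∈ Finset.range k, (2/r)^m * ‖(N^m).mulVec v‖) * Real.exp (-(r/2)*t) := by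
        rw [Finset.sum_mul]
        exact Finset.sum_congr rfl fun m _ => by ring

open NormedSpace in
private lemma stmt12_aux2 {p : ℕ} (Bc : Matrix (Fin p) (Fin p) ℂ) (r : ℝ) (hr : 0 < r)
    (hB : ∀ μ ∈ spectrum ℂ Bc, r ≤ μ.re) (w : Fin p → ℂ) :
    ∃ K : ℝ, 0 ≤ K ∧ ∀ t : ℝ, 0 ≤ t →
      ‖(exp (-((t : ℂ) • Bc))).mulVec w‖ ≤ K * Real.exp (-(r / 2) * t) := by
  classical
  set f : Module.End ℂ (Fin p → ℂ) := Matrix.toLinAlgEquiv' Bc with hf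
  have htop : ⨆ μ : ℂ, f.maxGenEigenspace μ = ⊤ := Module.End.iSup_maxGenEigenspace_eq_top f
  have hw : w ∈ ⨆ μ : ℂ, f.maxGenEigenspace μ := htop ▸ Submodule.mem_top
  rw [Submodule.mem_iSup_iff_exists_finsupp] at hw
  obtain ⟨c, hc, hcw⟩ := hw
  have key : ∀ μ : ℂ, ∃ K : ℝ, 0 ≤ K ∧ ∀ t : ℝ, 0 ≤ t →
      ‖(exp (-((t : ℂ) • Bc))).mulVec (c μ)‖ ≤ K * Real.exp (-(r / 2) * t) := by
    intro μ
    by_cases h0 : c μ = 0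
    · exact ⟨0, le_refl 0, fun t ht => by simp [h0, Matrix.mulVec_zero]⟩
    · obtain ⟨k, hk⟩ := (Module.End.mem_maxGenEigenspace f μ (c μ)).mp (hc μ)
      have hk' : ((Bc - μ • 1) ^ k).mulVec (c μ) = 0 := by
        have h1 : (Matrix.toLinAlgEquiv' ((Bc - μ • 1) ^ k)) (c μ) = 0 := by
          rw [map_pow, map_sub, _root_.map_smul, _root_.map_one]
          exact hk
        rwa [Matrix.toLinAlgEquiv'_apply] at h1
      have hμspec : μ ∈ spectrum ℂ Bc := by
        have hmem : c μ ∈ f.genEigenspace μ (k : ℕ∞) := by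
          rw [Module.End.mem_genEigenspace_nat]
          exact hk
        have hgen : f.HasGenEigenvalue μ k :=
          Submodule.ne_bot_iff _ |>.mpr ⟨c μ, hmem, h0⟩
        have heig : f.HasEigenvalue μ := Module.End.hasEigenvalue_of_hasGenEigenvalue hgen
        rw [← AlgEquiv.spectrum_eq (Matrix.toLinAlgEquiv' (R := ℂ) (n := Fin p)) Bc]
        exact heig.mem_spectrum
      exact stmt12_aux1 Bc r hr μ (hB μ hμspec) (c μ) k hk'
  choose K hK0 hK using key
  refine ⟨∑ μ ∈ c.support, K μ, Finset.sum_nonneg fun μ _ => hK0 μ, fun t ht => ?_⟩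
  have hdecomp : (exp (-((t : ℂ) • Bc))).mulVec w
      = ∑ μ ∈ c.support, (exp (-((t : ℂ) • Bc))).mulVec (c μ) := by
    rw [← hcw, Finsupp.sum, ← Matrix.mulVecLin_apply, map_sum]
    simp [Matrix.mulVecLin_apply]
  rw [hdecomp]
  calc ‖∑ μ ∈ c.support, (exp (-((t : ℂ) • Bc))).mulVec (c μ)‖
      ≤ ∑ μ ∈ c.support, ‖(exp (-((t : ℂ) • Bc))).mulVec (c μ)‖ := norm_sum_le _ _
    _ ≤ ∑ μ ∈ c.support, K μ * Real.exp (-(r / 2) * t) :=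
        Finset.sum_le_sum fun μ _ => hK μ t ht
    _ = (∑ μ ∈ c.support, K μ) * Real.exp (-(r / 2) * t) := by rw [Finset.sum_mul]

theorem stmt12 (p : ℕ) (B : Matrix (Fin p) (Fin p) ℝ) (r : ℝ) (hr : 0 < r)
    (hB : ∀ μ ∈ spectrum ℂ (B.map (Complex.ofReal)), r ≤ μ.re) :
    ∃ M : ℝ, 0 ≤ M ∧ ∀ t : ℝ, 0 ≤ t → ∀ i j : Fin p,
      |NormedSpace.exp (-(t • B)) i j| ≤ M * Real.exp (-(r / 2) * t) := by
  classical
  set Bc : Matrix (Fin p) (Fin p) ℂ := B.map Complex.ofReal with hBc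
  have hmap : ∀ t : ℝ, (NormedSpace.exp (-(t • B))).map Complex.ofReal
      = NormedSpace.exp (-((t:ℂ) • Bc)) := by
    intro t
    letI : SeminormedRing (Matrix (Fin p) (Fin p) ℝ) := Matrix.linftyOpSemiNormedRing
    letI : NormedRing (Matrix (Fin p) (Fin p) ℝ) := Matrix.linftyOpNormedRing
    letI : NormedAlgebra ℝ (Matrix (Fin p) (Fin p) ℝ) := Matrix.linftyOpNormedAlgebra
    letI : SeminormedRing (Matrix (Fin p) (Fin p) ℂ) := Matrix.linftyOpSemiNormedRing
    letI : NormedRing (Matrix (Fin p) (Fin p) ℂ) := Matrix.linftyOpNormedRing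
    letI : NormedAlgebra ℝ (Matrix (Fin p) (Fin p) ℂ) := Matrix.linftyOpNormedAlgebra
    letI : NormedAlgebra ℂ (Matrix (Fin p) (Fin p) ℂ) := Matrix.linftyOpNormedAlgebra
    letI : NormedAlgebra ℚ (Matrix (Fin p) (Fin p) ℝ) := NormedAlgebra.restrictScalars ℚ ℝ _
    set φ : Matrix (Fin p) (Fin p) ℝ →+* Matrix (Fin p) (Fin p) ℂ :=
      Complex.ofRealHom.mapMatrix with hφ
    have hcont : Continuous φ := continuous_id.matrix_map Complex.continuous_ofReal
    have h1' : φ (NormedSpace.exp (-(t • B))) = NormedSpace.exp (φ (-(t • B))) :=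
      NormedSpace.map_exp φ hcont (-(t • B))
    have h1 : (NormedSpace.exp (-(t • B))).map Complex.ofReal
        = NormedSpace.exp ((-(t • B)).map Complex.ofReal) := by
      exact h1'
    have h2 : (-(t • B)).map (Complex.ofReal) = -((t:ℂ) • Bc) := by
      ext i j
      simp [hBc, Matrix.map_apply]
    have h3 : NormedSpace.exp (-((t:ℂ) • Bc)) = NormedSpace.exp (-((t:ℂ) • Bc)) :=
      rfl
    rw [h1, h2, h3]
  have hKj : ∀ j : Fin p, ∃ K : ℝ, 0 ≤ K ∧ ∀ t : ℝ, 0 ≤ t →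
      ‖(NormedSpace.exp (-((t:ℂ) • Bc))).mulVec (Pi.single j 1)‖
        ≤ K * Real.exp (-(r / 2) * t) :=
    fun j => stmt12_aux2 Bc r hr hB (Pi.single j 1)
  choose K hK0 hK using hKj
  refine ⟨∑ j : Fin p, K j, Finset.sum_nonneg fun j _ => hK0 j, fun t ht i j => ?_⟩
  have hentry : |NormedSpace.exp (-(t • B)) i j|
      = ‖(NormedSpace.exp (-((t:ℂ) • Bc))) i j‖ := by
    rw [← hmap t, Matrix.map_apply]
    simp [Complex.norm_real]
  have hsingle : (NormedSpace.exp (-((t:ℂ) • Bc))).mulVec (Pi.single j 1) i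
      = (NormedSpace.exp (-((t:ℂ) • Bc))) i j := by
    simp [Matrix.mulVec_single]
  have hb : ‖(NormedSpace.exp (-((t:ℂ) • Bc))) i j‖
      ≤ ‖(NormedSpace.exp (-((t:ℂ) • Bc))).mulVec (Pi.single j 1)‖ := by
    rw [← hsingle]
    exact norm_le_pi_norm _ i
  calc |NormedSpace.exp (-(t • B)) i j|
      ≤ ‖(NormedSpace.exp (-((t:ℂ) • Bc))).mulVec (Pi.single j 1)‖ := hentry ▸ hb
    _ ≤ K j * Real.exp (-(r / 2) * t) := hK j t ht
    _ ≤ (∑ j : Fin p, K j) * Real.exp (-(r / 2) * t) := by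
        have : K j ≤ ∑ j : Fin p, K j :=
          Finset.single_le_sum (fun j _ => hK0 j) (Finset.mem_univ j)
        exact mul_le_mul_of_nonneg_right this (Real.exp_nonneg _)
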